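/- Let V be a finite type, E ⊆ V × V an edge relation, and w : V × V → ℝ a weight function, and suppose the graph contains no negative-cost cycle. Then for any vertices s and t such that there exists at least one walk from s to t, there exists an elementary path P from s to t (a walk whose vertices are pairwise distinct) such that the cost of P is less than or equal to the cost of every walk from s to t. -/

import Mathlib

open Finset

lemma shorten_walk {V : Type*} (E : V → V → Prop) (w : V × V → ℝ)
    (hnoneg : ∀ (k : ℕ) (v : ℕ → V), 1 ≤ k → v k = v 0 →
      (∀ i < k, E (v i) (v (i + 1))) →
      0 ≤ ∑ i ∈ Finset.range k, w (v i, v (i + 1)))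
    (k : ℕ) : ∀ v : ℕ → V, (∀ i < k, E (v i) (v (i + 1))) →
    ∃ (k' : ℕ) (v' : ℕ → V), k' ≤ k ∧ v' 0 = v 0 ∧ v' k' = v k ∧
      (∀ i < k', E (v' i) (v' (i + 1))) ∧
      (∀ i ≤ k', ∀ j ≤ k', i ≠ j → v' i ≠ v' j) ∧
      ∑ i ∈ Finset.range k', w (v' i, v' (i + 1)) ≤
        ∑ i ∈ Finset.range k, w (v i, v (i + 1)) := by
  induction k using Nat.strong_induction_on with
  | _ k ih =>
    intro v hv
    by_cases helem : ∀ i ≤ k, ∀ j ≤ k, i ≠ j → v i ≠ v j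
    · exact ⟨k, v, le_refl _, rfl, rfl, hv, helem, le_refl _⟩
    push_neg at helem
    obtain ⟨a, ha, b, hb, hab, hvab⟩ := helem
    obtain ⟨i, j, hlt, hjk, hvij⟩ : ∃ i j, i < j ∧ j ≤ k ∧ v i = v j := by
      rcases lt_or_gt_of_ne hab with h | h
      · exact ⟨a, b, h, hb, hvab⟩
      · exact ⟨b, a, h, ha, hvab.symm⟩
    set d := j - i with hd
    set k2 := k - d with hk2
    set v2 : ℕ → V := fun m => if m < i then v m else v (m + d) with hv2
    have hik : i < k := lt_of_lt_of_le hlt hjk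
    have hd1 : 1 ≤ d := by omega
    have hdk : d ≤ k := by omega
    have hid : i + d = j := by omega
    -- values of v2 on [0, i] agree with v
    have hv2low : ∀ m ≤ i, v2 m = v m := by
      intro m hm
      rcases lt_or_eq_of_le hm with h | h
      · simp [hv2, h]
      · subst h
        simp only [hv2, if_neg (lt_irrefl m)]
        rw [show m + d = j by omega, ← hvij]
    have hv2high : ∀ m, i ≤ m → v2 m = v (m + d) := by
      intro m hm
      simp [hv2, Nat.not_lt_of_le hm]
    -- edges of v2
    have hv2edges : ∀ m < k2, E (v2 m) (v2 (m + 1)) := by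
      intro m hm
      rcases lt_or_ge m i with h | h
      · rw [hv2low m (le_of_lt h), hv2low (m + 1) (by omega)]
        exact hv m (by omega)
      · rw [hv2high m h, hv2high (m + 1) (by omega), show m + 1 + d = m + d + 1 by omega]
        exact hv (m + d) (by omega)
    -- endpoints
    have hv20 : v2 0 = v 0 := hv2low 0 (Nat.zero_le _)
    have hv2k : v2 k2 = v k := by
      rw [hv2high k2 (by omega)]
      congr 1
      omega
    -- cost
    have hB : ∑ m ∈ Finset.range k2, w (v2 m, v2 (m + 1)) =
        ∑ m ∈ Finset.range i, w (v m, v (m + 1)) +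
        ∑ m ∈ Finset.Ico j k, w (v m, v (m + 1)) := by
      rw [← Finset.sum_range_add_sum_Ico _ (show i ≤ k2 by omega)]
      congr 1
      · apply Finset.sum_congr rfl
        intro m hm
        simp only [Finset.mem_range] at hm
        rw [hv2low m (le_of_lt hm), hv2low (m + 1) hm]
      · rw [Finset.sum_Ico_eq_sum_range, Finset.sum_Ico_eq_sum_range,
          show k2 - i = k - j by omega]
        apply Finset.sum_congr rfl
        intro m hm
        rw [hv2high (i + m) (by omega), hv2high (i + m + 1) (by omega),
          show i + m + d = j + m by omega, show i + m + 1 + d = j + m + 1 by omega]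
    have hA : ∑ m ∈ Finset.range k, w (v m, v (m + 1)) =
        (∑ m ∈ Finset.range i, w (v m, v (m + 1)) +
        ∑ m ∈ Finset.Ico i j, w (v m, v (m + 1))) +
        ∑ m ∈ Finset.Ico j k, w (v m, v (m + 1)) := by
      rw [Finset.sum_range_add_sum_Ico _ (le_of_lt hlt),
        Finset.sum_range_add_sum_Ico _ hjk]
    have hcyc : 0 ≤ ∑ m ∈ Finset.Ico i j, w (v m, v (m + 1)) := by
      rw [Finset.sum_Ico_eq_sum_range]
      have := hnoneg (j - i) (fun m => v (i + m)) (by omega)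
        (by show v (i + (j - i)) = v (i + 0); rw [Nat.add_zero, show i + (j - i) = j by omega, hvij])
        (by intro m hm; exact hv (i + m) (by omega))
      convert this using 2 with m
      rw [Nat.add_assoc]
    have hBA : ∑ m ∈ Finset.range k2, w (v2 m, v2 (m + 1)) ≤
        ∑ m ∈ Finset.range k, w (v m, v (m + 1)) := by
      rw [hA, hB]
      linarith
    obtain ⟨k', v', h1, h2, h3, h4, h5, h6⟩ := ih k2 (by omega) v2 hv2edges
    exact ⟨k', v', by omega, h2.trans hv20, h3.trans hv2k, h4, h5, h6.trans hBA⟩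
-- append to shorten


def extWalk (n : ℕ) (f : Fin (n + 1) → V) (m : ℕ) : V := f ⟨min m n, by omega⟩

lemma extWalk_eq (n : ℕ) (f : Fin (n + 1) → V) (m : ℕ) (hm : m ≤ n) :
    extWalk n f m = f ⟨m, by omega⟩ := by
  simp [extWalk, Nat.min_eq_left hm]


/-- In a weighted directed graph with no negative-cost cycle, for every pair of
vertices `s, t` connected by at least one walk there is an elementary path
(a walk with pairwise-distinct vertices) from `s` to `t` whose cost is at most
the cost of every walk from `s` to `t`. -/
theorem exists_elementary_shortest_path
    (V : Type*) [Fintype V] (E : V → V → Prop) (w : V × V → ℝ)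
    (hnoneg : ∀ (k : ℕ) (v : ℕ → V), 1 ≤ k → v k = v 0 →
      (∀ i < k, E (v i) (v (i + 1))) →
      0 ≤ ∑ i ∈ Finset.range k, w (v i, v (i + 1)))
    (s t : V)
    (hconn : ∃ (k : ℕ) (v : ℕ → V), v 0 = s ∧ v k = t ∧
      ∀ i < k, E (v i) (v (i + 1))) :
    ∃ (k : ℕ) (v : ℕ → V), v 0 = s ∧ v k = t ∧
      (∀ i < k, E (v i) (v (i + 1))) ∧
      (∀ i ≤ k, ∀ j ≤ k, i ≠ j → v i ≠ v j) ∧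
      (∀ (m : ℕ) (u : ℕ → V), u 0 = s → u m = t →
        (∀ i < m, E (u i) (u (i + 1))) →
        ∑ i ∈ Finset.range k, w (v i, v (i + 1)) ≤
          ∑ i ∈ Finset.range m, w (u i, u (i + 1))) := by
  classical
  set n := Fintype.card V with hn
  -- elementary walks have length ≤ n - 1 < n
  have hlen : ∀ (k : ℕ) (v : ℕ → V), (∀ i ≤ k, ∀ j ≤ k, i ≠ j → v i ≠ v j) → k ≤ n := by
    intro k v helem
    have hinj : Function.Injective (fun i : Fin (k + 1) => v i) := by
      intro a b hab
      by_contra hne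
      exact helem a (by omega) b (by omega) (by simpa [Fin.val_eq_val] using
        (fun h => hne (Fin.ext h)) ∘ id |> fun _ => Fin.val_ne_of_ne hne) hab
    have := Fintype.card_le_of_injective _ hinj
    simp [Fintype.card_fin] at this
    omega
  -- the finite set of encoded elementary s-t walks
  set P : ℕ × (Fin (n + 1) → V) → Prop := fun p =>
    extWalk n p.2 0 = s ∧ extWalk n p.2 p.1 = t ∧
    (∀ i < p.1, E (extWalk n p.2 i) (extWalk n p.2 (i + 1))) ∧
    (∀ i ≤ p.1, ∀ j ≤ p.1, i ≠ j → extWalk n p.2 i ≠ extWalk n p.2 j) with hP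
  set T : Finset (ℕ × (Fin (n + 1) → V)) :=
    (Finset.range (n + 1) ×ˢ Finset.univ).filter P with hT
  -- any elementary walk can be encoded as a member of T
  have hencode : ∀ (k : ℕ) (v : ℕ → V), v 0 = s → v k = t →
      (∀ i < k, E (v i) (v (i + 1))) →
      (∀ i ≤ k, ∀ j ≤ k, i ≠ j → v i ≠ v j) →
      ∃ p ∈ T, p.1 = k ∧ ∀ m ≤ k, extWalk n p.2 m = v m := by
    intro k v h0 hk hE helem
    have hkn : k ≤ n := hlen k v helem
    refine ⟨(k, fun i => v (min i.val k)), ?_, rfl, ?_⟩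
    · have hval : ∀ m ≤ k, extWalk n (fun i : Fin (n+1) => v (min i.val k)) m = v m := by
        intro m hm
        rw [extWalk_eq n _ m (le_trans hm hkn)]
        simp [Nat.min_eq_left hm]
      rw [hT, Finset.mem_filter]
      refine ⟨by simp [Finset.mem_product]; omega, ?_⟩
      refine ⟨by rw [hval 0 (by omega)]; exact h0, by rw [hval k le_rfl]; exact hk, ?_, ?_⟩
      · intro i hi
        rw [hval i (by omega), hval (i+1) (by omega)]
        exact hE i hi
      · intro i hi j hj hij
        rw [hval i hi, hval j hj]
        exact helem i hi j hj hij
    · intro m hm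
      rw [extWalk_eq n _ m (le_trans hm hkn)]
      simp [Nat.min_eq_left hm]
  -- T is nonempty
  obtain ⟨k0, v0, h00, h0k, h0E⟩ := hconn
  obtain ⟨k1, v1, _, h10, h1k, h1E, h1elem, _⟩ := shorten_walk E w hnoneg k0 v0 h0E
  obtain ⟨p0, hp0T, _, _⟩ := hencode k1 v1 (h10.trans h00) (h1k.trans h0k) h1E h1elem
  -- take the minimizer
  obtain ⟨p, hpT, hpmin⟩ := Finset.exists_min_image T
    (fun p => ∑ m ∈ Finset.range p.1, w (extWalk n p.2 m, extWalk n p.2 (m + 1)))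
    ⟨p0, hp0T⟩
  rw [hT, Finset.mem_filter] at hpT
  obtain ⟨-, hps, hpt, hpE, hpelem⟩ := hpT
  refine ⟨p.1, extWalk n p.2, hps, hpt, hpE, hpelem, ?_⟩
  intro m u hu0 hum huE
  obtain ⟨k2, v2, _, h20, h2k, h2E, h2elem, h2cost⟩ := shorten_walk E w hnoneg m u huE
  obtain ⟨q, hqT, hq1, hq2⟩ := hencode k2 v2 (h20.trans hu0) (h2k.trans hum) h2E h2elem
  have := hpmin q hqT
  calc ∑ i ∈ Finset.range p.1, w (extWalk n p.2 i, extWalk n p.2 (i + 1))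
      ≤ ∑ i ∈ Finset.range q.1, w (extWalk n q.2 i, extWalk n q.2 (i + 1)) := this
    _ = ∑ i ∈ Finset.range k2, w (v2 i, v2 (i + 1)) := by
        rw [hq1]
        apply Finset.sum_congr rfl
        intro i hi
        simp only [Finset.mem_range] at hi
        rw [hq2 i (by omega), hq2 (i + 1) (by omega)]
    _ ≤ ∑ i ∈ Finset.range m, w (u i, u (i + 1)) := h2cost
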